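/- arXiv:1006.0706 — 2 statements merged into one kernel-verified Lean document; each statement's English description precedes it below -/
import Mathlib

section
/- Let R be a right-flat TRS over a signature with constant set Σ_0, let E be a permutative theory over the same signature, and let s be a term such that R/E is terminating from s. Then every term t reachable from s with R/E satisfies height(t) ≤ height(s) + |Σ_0|. -/
/-- First-order terms over function symbols `F` and variables `V`. -/
inductive Tm (F V : Type) : Type
  | var : V → Tm F V
  | app : F → List (Tm F V) → Tm F V

namespace Tm

variable {F V : Type}

/-- Height of a term: 0 for variables and constants. -/
def height : Tm F V → ℕ
  | var _ => 0
  | app _ ts => ts.attach.foldr (fun t m => max (height t.1 + 1) m) 0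
decreasing_by all_goals (simp_wf; have := List.sizeOf_lt_of_mem t.2; omega)

/-- Size (number of positions) of a term. -/
def size : Tm F V → ℕ
  | var _ => 1
  | app _ ts => 1 + (ts.attach.map (fun t => size t.1)).sum
decreasing_by all_goals (simp_wf; have := List.sizeOf_lt_of_mem t.2; omega)

/-- Apply a substitution. -/
def subst (σ : V → Tm F V) : Tm F V → Tm F V
  | var x => σ x
  | app f ts => app f (ts.attach.map (fun t => subst σ t.1))
decreasing_by all_goals (simp_wf; have := List.sizeOf_lt_of_mem t.2; omega)

/-- List of variable occurrences. -/
def varList : Tm F V → List V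
  | var x => [x]
  | app _ ts => (ts.attach.map (fun t => varList t.1)).flatten
decreasing_by all_goals (simp_wf; have := List.sizeOf_lt_of_mem t.2; omega)

/-- List of function-symbol occurrences. -/
def symList : Tm F V → List F
  | var _ => []
  | app f ts => f :: (ts.attach.map (fun t => symList t.1)).flatten
decreasing_by all_goals (simp_wf; have := List.sizeOf_lt_of_mem t.2; omega)

/-- The subterm at a position (positions are lists of argument indices). -/
def subAt : Tm F V → List ℕ → Option (Tm F V)
  | t, [] => some t
  | var _, _ :: _ => none
  | app _ ts, i :: p => match ts[i]? with
      | some u => subAt u p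
      | none => none

/-- Replace the subterm at a position. -/
def replAt : Tm F V → List ℕ → Tm F V → Option (Tm F V)
  | _, [], s => some s
  | var _, _ :: _, _ => none
  | app f ts, i :: p, s => match ts[i]? with
      | some u => (replAt u p s).map (fun u' => app f (ts.set i u'))
      | none => none

/-- `p` is a position of `t`. -/
def IsPos (t : Tm F V) (p : List ℕ) : Prop := (t.subAt p).isSome

/-- A term is a constant if it is a nullary function application. -/
def IsConst (t : Tm F V) : Prop := ∃ f : F, t = app f []

def Ground (t : Tm F V) : Prop := t.varList = []

/-- A term is linear if each variable occurs at most once. -/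
def Linear (t : Tm F V) : Prop := t.varList.Nodup

/-- A term is flat if its height is at most 1. -/
def Flat (t : Tm F V) : Prop := t.height ≤ 1

/-- A term is shallow if all variables occur at depth at most 1. -/
def Shallow (t : Tm F V) : Prop :=
  ∀ (p : List ℕ) (x : V), t.subAt p = some (var x) → p.length ≤ 1

end Tm

/-- A rewrite rule. -/
structure Rule (F V : Type) where
  lhs : Tm F V
  rhs : Tm F V

namespace Rule

variable {F V : Type}

/-- Standard well-formedness: the lhs is not a variable and variables of the
rhs occur in the lhs. -/
def WF (r : Rule F V) : Prop :=
  (∀ x : V, r.lhs ≠ Tm.var x) ∧ ∀ x ∈ r.rhs.varList, x ∈ r.lhs.varList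

def RightFlat (r : Rule F V) : Prop := r.rhs.Flat
def RightLinear (r : Rule F V) : Prop := r.rhs.Linear
def RightShallow (r : Rule F V) : Prop := r.rhs.Shallow
def FlatRule (r : Rule F V) : Prop := r.lhs.Flat ∧ r.rhs.Flat
def ShallowRule (r : Rule F V) : Prop := r.lhs.Shallow ∧ r.rhs.Shallow
def Collapsing (r : Rule F V) : Prop := ∃ x : V, r.rhs = Tm.var x

/-- A permutative rule: linear, flat, height-preserving and variable-preserving. -/
def Permutative (r : Rule F V) : Prop :=
  r.WF ∧ r.lhs.Linear ∧ r.rhs.Linear ∧ r.lhs.Flat ∧ r.rhs.Flat ∧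
    r.lhs.height = r.rhs.height ∧ ∀ x : V, x ∈ r.lhs.varList ↔ x ∈ r.rhs.varList

end Rule

/-- A permutative theory: a symmetric set of permutative rules. -/
def PermutativeTheory {F V : Type} (E : Set (Rule F V)) : Prop :=
  (∀ r ∈ E, r.Permutative) ∧ ∀ r ∈ E, (⟨r.rhs, r.lhs⟩ : Rule F V) ∈ E

section Rewriting

variable {F V : Type}

/-- One rewrite step with rule `l → r` at position `p` using substitution `σ`. -/
def RewWith (l r : Tm F V) (p : List ℕ) (σ : V → Tm F V) (s t : Tm F V) : Prop :=
  s.subAt p = some (l.subst σ) ∧ s.replAt p (r.subst σ) = some t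

/-- One rewrite step with TRS `R` at position `p`. -/
def RewAt (R : Set (Rule F V)) (p : List ℕ) (s t : Tm F V) : Prop :=
  ∃ r ∈ R, ∃ σ : V → Tm F V, RewWith r.lhs r.rhs p σ s t

/-- One rewrite step with TRS `R`. -/
def Rew (R : Set (Rule F V)) (s t : Tm F V) : Prop := ∃ p, RewAt R p s t

/-- Reachability: reflexive-transitive closure of one-step rewriting. -/
def Reach (R : Set (Rule F V)) : Tm F V → Tm F V → Prop :=
  Relation.ReflTransGen (Rew R)

/-- One rewrite step with `R` modulo `E` : `s →E* · →R · →E* t`. -/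
def RewMod (R E : Set (Rule F V)) (s t : Tm F V) : Prop :=
  ∃ u v, Reach E s u ∧ Rew R u v ∧ Reach E v t

/-- `R/E` is terminating from `s`. -/
def TerminatingFrom (R E : Set (Rule F V)) (s : Tm F V) : Prop :=
  ¬ ∃ f : ℕ → Tm F V, f 0 = s ∧ ∀ n, RewMod R E (f n) (f (n + 1))

/-- `R/E` is terminating. -/
def Terminating (R E : Set (Rule F V)) : Prop :=
  ¬ ∃ f : ℕ → Tm F V, ∀ n, RewMod R E (f n) (f (n + 1))

/-- `t` is reachable from some constant. -/
def FromConst (R : Set (Rule F V)) (t : Tm F V) : Prop :=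
  ∃ f : F, Reach R (Tm.app f []) t

/-- The measure `‖t‖`: number of positions of `t` whose subterm is not reachable
from a constant. -/
noncomputable def meas (R : Set (Rule F V)) (t : Tm F V) : ℕ :=
  Nat.card {p : List ℕ // ∃ u, t.subAt p = some u ∧ ¬ FromConst R u}

/-- `t` is a normal form w.r.t. `R/E`. -/
def NFMod (R E : Set (Rule F V)) (t : Tm F V) : Prop := ¬ ∃ t', RewMod R E t t'

/-- `t` is `R`-irreducible. -/
def NF (R : Set (Rule F V)) (t : Tm F V) : Prop := ¬ ∃ t', Rew R t t'

/-- Innermost rewrite step with `R` (plain rewriting): all proper subterms of the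
redex are irreducible. -/
def IRew (R : Set (Rule F V)) (s t : Tm F V) : Prop :=
  ∃ p, RewAt R p s t ∧
    ∀ (q : List ℕ) (w : Tm F V), q ≠ [] → s.subAt (p ++ q) = some w → NF R w

/-- Innermost rewrite step with `R` modulo `E`. -/
def IRewMod (R E : Set (Rule F V)) (s t : Tm F V) : Prop :=
  ∃ u v, ∃ p : List ℕ, Reach E s u ∧ RewAt R p u v ∧ Reach E v t ∧
    ∀ (q : List ℕ) (w : Tm F V), q ≠ [] → u.subAt (p ++ q) = some w → NFMod R E w

/-- Innermost termination of `R/E`. -/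
def ITerminating (R E : Set (Rule F V)) : Prop :=
  ¬ ∃ f : ℕ → Tm F V, ∀ n, IRewMod R E (f n) (f (n + 1))

end Rewriting

section Marking

variable {F V : Type}

/-- A derivation of length `n` with explicit rules, positions and substitutions. -/
def IsDeriv (R : Set (Rule F V)) (n : ℕ) (s : ℕ → Tm F V) (rl : ℕ → Rule F V)
    (pp : ℕ → List ℕ) (sb : ℕ → V → Tm F V) : Prop :=
  ∀ i < n, rl i ∈ R ∧ RewWith (rl i).lhs (rl i).rhs (pp i) (sb i) (s i) (s (i + 1))

/-- `p'` is strictly below `p̄` : `p̄` is a proper prefix of `p'`. -/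
def StrictBelow (pbar p : List ℕ) : Prop := ∃ q, q ≠ [] ∧ p = pbar ++ q

/-- A marking of a derivation. -/
def IsMarking (n : ℕ) (s : ℕ → Tm F V) (rl : ℕ → Rule F V)
    (pp : ℕ → List ℕ) (M : ℕ → List ℕ → Tm F V) : Prop :=
  (∀ p t, (s 0).subAt p = some t → M 0 p = t) ∧
  ∀ i < n,
    (∀ p, (s (i + 1)).IsPos p → ¬ StrictBelow (pp i) p → M (i + 1) p = M i p) ∧
    (∀ (j : ℕ) (u : Tm F V), (rl i).rhs.subAt [j] = some u → u.IsConst →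
        M (i + 1) (pp i ++ [j]) = u) ∧
    (∀ (j : ℕ) (p₁ : List ℕ) (x : V), (rl i).rhs.subAt [j] = some (Tm.var x) →
        (s (i + 1)).IsPos (pp i ++ j :: p₁) →
        ∃ q₀ : List ℕ, (rl i).lhs.subAt q₀ = some (Tm.var x) ∧
          M (i + 1) (pp i ++ j :: p₁) = M i (pp i ++ q₀ ++ p₁))

end Marking

section WFSig

variable {F V : Type}

/-- Terms respecting the arity function. -/
inductive WFT (ar : F → ℕ) : Tm F V → Prop
  | var (x : V) : WFT ar (Tm.var x)
  | app (f : F) (ts : List (Tm F V)) : ts.length = ar f →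
      (∀ t ∈ ts, WFT ar t) → WFT ar (Tm.app f ts)

end WFSig


namespace Tm

variable {F V : Type}

theorem height_app (f : F) (ts : List (Tm F V)) :
    height (app f ts) = ts.foldr (fun t m => max (height t + 1) m) 0 := by
  rw [height]; exact List.foldr_attach (l := ts) (f := fun t m => max (height t + 1) m) (b := 0)

theorem subst_app (σ : V → Tm F V) (f : F) (ts : List (Tm F V)) :
    subst σ (app f ts) = app f (ts.map (subst σ)) := by
  rw [subst]; congr 1; exact List.attach_map_val

theorem subst_var (σ : V → Tm F V) (x : V) : subst σ (var x) = σ x := by rw [subst]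

theorem varList_var (x : V) : varList (var x : Tm F V) = [x] := by rw [varList]

theorem varList_app (f : F) (ts : List (Tm F V)) :
    varList (app f ts) = (ts.map varList).flatten := by
  rw [varList]; congr 1; exact List.attach_map_val

theorem height_arg_lt {f : F} {ts : List (Tm F V)} {t : Tm F V} (h : t ∈ ts) :
    height t + 1 ≤ height (app f ts) := by
  rw [height_app]
  induction ts with
  | nil => cases h
  | cons a l ih =>
    simp only [List.foldr_cons]
    rcases List.mem_cons.1 h with rfl | h'
    · exact le_max_left _ _
    · exact le_trans (ih h') (le_max_right _ _)

theorem height_app_le {f : F} {ts : List (Tm F V)} {n : ℕ}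
    (h : ∀ t ∈ ts, height t + 1 ≤ n) : height (app f ts) ≤ n := by
  rw [height_app]
  induction ts with
  | nil => simp
  | cons a l ih =>
    simp only [List.foldr_cons, max_le_iff]
    exact ⟨h a (by simp), ih (fun t ht => h t (List.mem_cons_of_mem _ ht))⟩

theorem height_eq_zero_cases (t : Tm F V) (h : height t = 0) :
    (∃ x, t = var x) ∨ ∃ f : F, t = app f [] := by
  cases t with
  | var x => exact Or.inl ⟨x, rfl⟩
  | app f ts =>
    refine Or.inr ⟨f, ?_⟩
    cases ts with
    | nil => rfl
    | cons a l => exact absurd h (by have := height_arg_lt (f := f) (List.mem_cons_self (a := a) (l := l)); omega)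

theorem flat_arg_cases {f : F} {ts : List (Tm F V)} (h : height (app f ts) ≤ 1)
    {t : Tm F V} (ht : t ∈ ts) : (∃ x, t = var x) ∨ ∃ c : F, t = app c [] := by
  have := height_arg_lt (f := f) ht
  exact height_eq_zero_cases t (by omega)

@[elab_as_elim]
theorem ind {P : Tm F V → Prop} (hv : ∀ x, P (var x))
    (ha : ∀ (f : F) (ts : List (Tm F V)), (∀ t ∈ ts, P t) → P (app f ts)) : ∀ t, P t := by
  intro t
  refine Tm.rec (motive_2 := fun ts => ∀ t ∈ ts, P t) (fun x => hv x) (fun f ts ih => ha f ts ih)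
    ?_ ?_ t
  · intro t ht; cases ht
  · intro a l pa pl t ht
    rcases List.mem_cons.1 ht with rfl | h'
    · exact pa
    · exact pl t h'

theorem subAt_nil (t : Tm F V) : subAt t [] = some t := by cases t <;> rfl

theorem subAt_app_cons (f : F) (ts : List (Tm F V)) (i : ℕ) (p : List ℕ) :
    subAt (app f ts) (i :: p) = ts[i]?.bind (fun u => subAt u p) := by
  cases h : ts[i]? <;> simp [subAt, h]

theorem subAt_var_cons (x : V) (i : ℕ) (p : List ℕ) :
    subAt (var x : Tm F V) (i :: p) = none := rfl

theorem subAt_append (p q : List ℕ) : ∀ t : Tm F V,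
    subAt t (p ++ q) = (subAt t p).bind (fun u => subAt u q) := by
  induction p with
  | nil => intro t; simp [subAt_nil]
  | cons i p ih =>
    intro t
    cases t with
    | var x => simp [subAt_var_cons]
    | app f ts =>
      rw [List.cons_append, subAt_app_cons, subAt_app_cons]
      cases h : ts[i]? with
      | none => rfl
      | some u => simpa using ih u

/-- every position depth is at most the height -/
theorem length_le_height : ∀ (t : Tm F V) (p : List ℕ) (u : Tm F V),
    subAt t p = some u → p.length + height u ≤ height t := by
  intro t
  induction t using Tm.ind with
  | hv x =>
    intro p u h
    cases p with
    | nil => rw [subAt_nil] at h; cases h; simp [height]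
    | cons i p => simp [subAt_var_cons] at h
  | ha f ts ih =>
    intro p u h
    cases p with
    | nil => rw [subAt_nil] at h; cases h; simp
    | cons i p =>
      rw [subAt_app_cons] at h
      cases hg : ts[i]? with
      | none => rw [hg] at h; simp at h
      | some a =>
        rw [hg] at h; simp at h
        have hm : a ∈ ts := by
          obtain ⟨hl, rfl⟩ := List.getElem?_eq_some_iff.mp hg
          exact List.getElem_mem hl
        have := ih a hm p u h
        have := height_arg_lt (f := f) hm
        simp only [List.length_cons]
        omega

/-- there is a position realizing the height -/
theorem exists_deep_pos : ∀ (t : Tm F V), ∃ p u, subAt t p = some u ∧ p.length = height t := by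
  intro t
  induction t using Tm.ind with
  | hv x => exact ⟨[], _, subAt_nil _, by simp [height]⟩
  | ha f ts ih =>
    by_cases h0 : height (app f ts) = 0
    · exact ⟨[], _, subAt_nil _, by simp [h0]⟩
    · have : ∃ t ∈ ts, height (app f ts) = height t + 1 := by
        by_contra hc
        push_neg at hc
        have : height (app f ts) ≤ height (app f ts) - 1 := by
          apply height_app_le
          intro t ht
          have h1 := height_arg_lt (f := f) ht
          have h2 := hc t ht
          omega
        omega
      obtain ⟨a, ha, heq⟩ := this
      obtain ⟨p, u, hp, hlen⟩ := ih a ha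
      obtain ⟨i, hilt, hi⟩ := List.getElem_of_mem ha
      refine ⟨i :: p, u, ?_, ?_⟩
      · rw [subAt_app_cons, List.getElem?_eq_getElem hilt, hi]; exact hp
      · simp [hlen, heq]

end Tm

namespace Tm

variable {F V : Type}

theorem replAt_nil (t v : Tm F V) : replAt t [] v = some v := by cases t <;> rfl

theorem replAt_app_cons (f : F) (ts : List (Tm F V)) (i : ℕ) (p : List ℕ) (v : Tm F V) :
    replAt (app f ts) (i :: p) v
      = ts[i]?.bind (fun u => (replAt u p v).map (fun u' => app f (ts.set i u'))) := by
  cases h : ts[i]? <;> simp [replAt, h]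

theorem replAt_var_cons (x : V) (i : ℕ) (p : List ℕ) (v : Tm F V) :
    replAt (var x : Tm F V) (i :: p) v = none := rfl

theorem replAt_isSome {q : List ℕ} : ∀ {t u : Tm F V}, subAt t q = some u →
    ∀ v, ∃ t', replAt t q v = some t' := by
  induction q with
  | nil => intro t u _ v; exact ⟨v, replAt_nil t v⟩
  | cons i p ih =>
    intro t u h v
    cases t with
    | var x => rw [subAt_var_cons] at h; cases h
    | app f ts =>
      rw [subAt_app_cons] at h
      cases hg : ts[i]? with
      | none => rw [hg] at h; cases h
      | some a =>
        rw [hg] at h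
        obtain ⟨u', hu'⟩ := ih (by simpa using h) v
        exact ⟨app f (ts.set i u'), by rw [replAt_app_cons, hg]; simp [hu']⟩

theorem subAt_replAt_self {v : Tm F V} : ∀ {q : List ℕ} {t t' : Tm F V},
    replAt t q v = some t' → subAt t' q = some v := by
  intro q
  induction q with
  | nil => intro t t' h; rw [replAt_nil] at h; cases h; exact subAt_nil v
  | cons i p ih =>
    intro t t' h
    cases t with
    | var x => rw [replAt_var_cons] at h; cases h
    | app f ts =>
      rw [replAt_app_cons] at h
      cases hg : ts[i]? with
      | none => rw [hg] at h; cases h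
      | some a =>
        rw [hg] at h
        simp only [Option.bind_some] at h
        cases hr : replAt a p v with
        | none => rw [hr] at h; cases h
        | some a' =>
          rw [hr] at h
          simp at h
          subst h
          rw [subAt_app_cons]
          have hlt : i < ts.length := (List.getElem?_eq_some_iff.mp hg).1
          rw [List.getElem?_set_self (by simpa using hlt)]
          simpa using ih hr

theorem replAt_prefix {v : Tm F V} : ∀ (p : List ℕ) {rest : List ℕ} {t t' : Tm F V},
    replAt t (p ++ rest) v = some t' →
    ∃ u u', subAt t p = some u ∧ replAt u rest v = some u' ∧ subAt t' p = some u' := by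
  intro p
  induction p with
  | nil =>
    intro rest t t' h
    exact ⟨t, t', subAt_nil t, h, subAt_nil t'⟩
  | cons i p ih =>
    intro rest t t' h
    cases t with
    | var x => rw [List.cons_append, replAt_var_cons] at h; cases h
    | app f ts =>
      rw [List.cons_append, replAt_app_cons] at h
      cases hg : ts[i]? with
      | none => rw [hg] at h; cases h
      | some a =>
        rw [hg] at h
        simp only [Option.bind_some] at h
        cases hr : replAt a (p ++ rest) v with
        | none => rw [hr] at h; cases h
        | some a' =>
          rw [hr] at h; simp at h; subst h
          obtain ⟨u, u', h1, h2, h3⟩ := ih hr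
          have hlt : i < ts.length := (List.getElem?_eq_some_iff.mp hg).1
          refine ⟨u, u', ?_, h2, ?_⟩
          · rw [subAt_app_cons, hg]; simpa using h1
          · rw [subAt_app_cons, List.getElem?_set_self (by simpa using hlt)]
            simpa using h3

theorem subAt_replAt_ne_head {v : Tm F V} {i j : ℕ} (hne : i ≠ j) {q' : List ℕ}
    {t t' : Tm F V} (h : replAt t (j :: q') v = some t') (p' : List ℕ) :
    subAt t' (i :: p') = subAt t (i :: p') := by
  cases t with
  | var x => rw [replAt_var_cons] at h; cases h
  | app f ts =>
    rw [replAt_app_cons] at h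
    cases hg : ts[j]? with
    | none => rw [hg] at h; cases h
    | some a =>
      rw [hg] at h; simp only [Option.bind_some] at h
      cases hr : replAt a q' v with
      | none => rw [hr] at h; cases h
      | some a' =>
        rw [hr] at h; simp at h; subst h
        rw [subAt_app_cons, subAt_app_cons, List.getElem?_set_ne (by omega)]

theorem subAt_replAt_diverge {v : Tm F V} {i j : ℕ} (hne : i ≠ j) :
    ∀ (w : List ℕ) {q' : List ℕ} {t t' : Tm F V},
    replAt t (w ++ j :: q') v = some t' → ∀ p',
    subAt t' (w ++ i :: p') = subAt t (w ++ i :: p') := by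
  intro w
  induction w with
  | nil => intro q' t t' h p'; exact subAt_replAt_ne_head hne h p'
  | cons k w ih =>
    intro q' t t' h p'
    cases t with
    | var x => rw [List.cons_append, replAt_var_cons] at h; cases h
    | app f ts =>
      rw [List.cons_append, replAt_app_cons] at h
      cases hg : ts[k]? with
      | none => rw [hg] at h; cases h
      | some a =>
        rw [hg] at h; simp only [Option.bind_some] at h
        cases hr : replAt a (w ++ j :: q') v with
        | none => rw [hr] at h; cases h
        | some a' =>
          rw [hr] at h; simp at h; subst h
          have hlt : k < ts.length := (List.getElem?_eq_some_iff.mp hg).1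
          simp only [List.cons_append]
          rw [subAt_app_cons, subAt_app_cons,
            List.getElem?_set_self (by simpa using hlt), hg]
          simp only [Option.bind_some]
          exact ih hr p'

theorem replAt_compose {v : Tm F V} : ∀ (p : List ℕ) {p' : List ℕ} {t u u' : Tm F V},
    subAt t p = some u → replAt u p' v = some u' →
    ∀ {t' : Tm F V}, replAt t p u' = some t' → replAt t (p ++ p') v = some t' := by
  intro p
  induction p with
  | nil =>
    intro p' t u u' h1 h2 t' h3
    rw [subAt_nil] at h1; cases h1
    rw [replAt_nil] at h3; cases h3
    simpa using h2
  | cons i p ih =>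
    intro p' t u u' h1 h2 t' h3
    cases t with
    | var x => rw [subAt_var_cons] at h1; cases h1
    | app f ts =>
      rw [subAt_app_cons] at h1
      rw [replAt_app_cons] at h3
      cases hg : ts[i]? with
      | none => rw [hg] at h1; cases h1
      | some a =>
        rw [hg] at h1; rw [hg] at h3
        simp only [Option.bind_some] at h1 h3
        cases hr : replAt a p u' with
        | none => rw [hr] at h3; cases h3
        | some a' =>
          rw [hr] at h3; simp at h3; subst h3
          rw [List.cons_append, replAt_app_cons, hg]
          simp only [Option.bind_some]
          rw [ih h1 h2 hr]
          rfl

theorem subAt_subst {σ : V → Tm F V} : ∀ {p : List ℕ} {t u : Tm F V},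
    subAt t p = some u → subAt (subst σ t) p = some (subst σ u) := by
  intro p
  induction p with
  | nil => intro t u h; rw [subAt_nil] at h; cases h; exact subAt_nil _
  | cons i p ih =>
    intro t u h
    cases t with
    | var x => rw [subAt_var_cons] at h; cases h
    | app f ts =>
      rw [subAt_app_cons] at h
      cases hg : ts[i]? with
      | none => rw [hg] at h; cases h
      | some a =>
        rw [hg] at h; simp only [Option.bind_some] at h
        rw [subst_app, subAt_app_cons, List.getElem?_map, hg]
        simpa using ih h

theorem mem_varList_iff {x : V} : ∀ {t : Tm F V},
    x ∈ varList t ↔ ∃ p, subAt t p = some (var x) := by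
  intro t
  induction t using Tm.ind with
  | hv y =>
    constructor
    · intro h
      simp [varList] at h
      exact ⟨[], by rw [subAt_nil, h]⟩
    · rintro ⟨p, hp⟩
      cases p with
      | nil => rw [subAt_nil] at hp; cases hp; simp [varList]
      | cons i p => rw [subAt_var_cons] at hp; cases hp
  | ha f ts ih =>
    rw [varList_app]
    constructor
    · intro h
      rw [List.mem_flatten] at h
      obtain ⟨l, hl, hx⟩ := h
      rw [List.mem_map] at hl
      obtain ⟨a, ha, rfl⟩ := hl
      obtain ⟨p, hp⟩ := (ih a ha).1 hx
      obtain ⟨i, hilt, rfl⟩ := List.getElem_of_mem ha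
      exact ⟨i :: p, by rw [subAt_app_cons, List.getElem?_eq_getElem hilt]; simpa using hp⟩
    · rintro ⟨p, hp⟩
      cases p with
      | nil => rw [subAt_nil] at hp; cases hp
      | cons i p =>
        rw [subAt_app_cons] at hp
        cases hg : ts[i]? with
        | none => rw [hg] at hp; cases hp
        | some a =>
          rw [hg] at hp; simp only [Option.bind_some] at hp
          have ha : a ∈ ts := by
            obtain ⟨hl, rfl⟩ := List.getElem?_eq_some_iff.mp hg
            exact List.getElem_mem hl
          rw [List.mem_flatten]
          exact ⟨varList a, List.mem_map.2 ⟨a, ha, rfl⟩, (ih a ha).2 ⟨p, hp⟩⟩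

theorem height_const (c : F) : height (app c [] : Tm F V) = 0 := by simp [height_app]

theorem subst_const (σ : V → Tm F V) (c : F) : subst σ (app c []) = app c [] := by
  rw [subst_app]; rfl

end Tm

/-- Divergence trichotomy for positions. -/
theorem pos_trichotomy : ∀ (p q : List ℕ), p <+: q ∨ q <+: p ∨
    ∃ (w : List ℕ) (i j : ℕ) (p' q' : List ℕ), i ≠ j ∧ p = w ++ i :: p' ∧ q = w ++ j :: q' := by
  intro p
  induction p with
  | nil => intro q; exact Or.inl (List.nil_prefix)
  | cons i p ih =>
    intro q
    cases q with
    | nil => exact Or.inr (Or.inl (List.nil_prefix))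
    | cons j q =>
      by_cases hij : i = j
      · subst hij
        rcases ih q with h | h | ⟨w, a, b, p', q', hab, rfl, rfl⟩
        · exact Or.inl (List.cons_prefix_cons.mpr ⟨rfl, h⟩)
        · exact Or.inr (Or.inl (List.cons_prefix_cons.mpr ⟨rfl, h⟩))
        · exact Or.inr (Or.inr ⟨i :: w, a, b, p', q', hab, rfl, rfl⟩)
      · exact Or.inr (Or.inr ⟨[], i, j, p, q, hij, rfl, rfl⟩)

section RewLemmas

variable {F V : Type}

theorem Rew_union_iff {R E : Set (Rule F V)} {s t : Tm F V} :
    Rew (R ∪ E) s t ↔ Rew R s t ∨ Rew E s t := by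
  constructor
  · rintro ⟨p, rl, hrl, σ, hw⟩
    rcases hrl with h | h
    · exact Or.inl ⟨p, rl, h, σ, hw⟩
    · exact Or.inr ⟨p, rl, h, σ, hw⟩
  · rintro (⟨p, rl, hrl, σ, hw⟩ | ⟨p, rl, hrl, σ, hw⟩)
    · exact ⟨p, rl, Or.inl hrl, σ, hw⟩
    · exact ⟨p, rl, Or.inr hrl, σ, hw⟩

/-- context closure of a rewrite step -/
theorem Rew.ctx {S : Set (Rule F V)} {u u' t : Tm F V} {p : List ℕ}
    (h : Rew S u u') (hsub : t.subAt p = some u) :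
    ∃ t', t.replAt p u' = some t' ∧ Rew S t t' := by
  obtain ⟨p', rl, hrl, σ, h1, h2⟩ := h
  obtain ⟨t', ht'⟩ := Tm.replAt_isSome hsub u'
  refine ⟨t', ht', p ++ p', rl, hrl, σ, ?_, ?_⟩
  · rw [Tm.subAt_append, hsub]; simpa using h1
  · exact Tm.replAt_compose p hsub h2 ht'

/-- context closure of reachability -/
theorem Reach_ctx {S : Set (Rule F V)} {u u' : Tm F V}
    (h : Relation.ReflTransGen (Rew S) u u') :
    ∀ {t : Tm F V} {p : List ℕ}, t.subAt p = some u →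
    ∃ t', Relation.ReflTransGen (Rew S) t t' ∧ t'.subAt p = some u' := by
  induction h using Relation.ReflTransGen.head_induction_on with
  | refl => intro t p h; exact ⟨t, Relation.ReflTransGen.refl, h⟩
  | head hstep _ ih =>
    intro t p hsub
    obtain ⟨t₁, hrep, hR⟩ := hstep.ctx hsub
    obtain ⟨t', hRT, hs'⟩ := ih (Tm.subAt_replAt_self hrep)
    exact ⟨t', Relation.ReflTransGen.head hR hRT, hs'⟩

/-- An E-step from a constant yields a constant. -/
theorem E_step_const {E : Set (Rule F V)} (hE : PermutativeTheory E) {c : F} {t' : Tm F V}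
    (h : Rew E (Tm.app c []) t') : ∃ c', t' = Tm.app c' [] := by
  obtain ⟨p, rl, hrl, σ, h1, h2⟩ := h
  cases p with
  | cons i p =>
    rw [Tm.subAt_app_cons] at h1
    simp at h1
  | nil =>
    rw [Tm.subAt_nil] at h1
    rw [Tm.replAt_nil] at h2
    have h1' : Tm.app c [] = rl.lhs.subst σ := by injection h1
    have hperm := hE.1 rl hrl
    have hperm' := hE.1 _ (hE.2 rl hrl)
    have hl : rl.lhs = Tm.app c ([] : List (Tm F V)) := by
      cases hl : rl.lhs with
      | var x => exact absurd hl (hperm.1.1 x)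
      | app f ts =>
        rw [hl, Tm.subst_app] at h1'
        injection h1' with hf hts
        subst hf
        have : ts = [] := by
          have := congrArg List.length hts
          simpa using (List.length_eq_zero_iff.mp this.symm)
        rw [this]
    have hh : rl.rhs.height = 0 := by
      have := hperm.2.2.2.2.2.1
      rw [hl] at this
      rw [← this, Tm.height_const]
    rcases Tm.height_eq_zero_cases _ hh with ⟨x, hx⟩ | ⟨g, hg⟩
    · exact absurd hx (hperm'.1.1 x)
    · refine ⟨g, ?_⟩
      injection h2 with h2
      rw [← h2, hg, Tm.subst_const]

theorem E_reach_const {E : Set (Rule F V)} (hE : PermutativeTheory E) {c : F} {w : Tm F V}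
    (h : Relation.ReflTransGen (Rew E) (Tm.app c []) w) : ∃ c', w = Tm.app c' [] := by
  induction h with
  | refl => exact ⟨c, rfl⟩
  | tail hstep hlast ih =>
    obtain ⟨c₁, rfl⟩ := ih
    exact E_step_const hE hlast

/-- split off the first R-step of an R∪E derivation -/
theorem first_R_split {R E : Set (Rule F V)} {x y : Tm F V}
    (h : Relation.ReflTransGen (Rew (R ∪ E)) x y) :
    Relation.ReflTransGen (Rew E) x y ∨
      ∃ a b, Relation.ReflTransGen (Rew E) x a ∧ Rew R a b ∧
        Relation.ReflTransGen (Rew (R ∪ E)) b y := by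
  induction h using Relation.ReflTransGen.head_induction_on with
  | refl => exact Or.inl Relation.ReflTransGen.refl
  | @head u v hstep htail ih =>
    rcases Rew_union_iff.1 hstep with hR | hEstep
    · exact Or.inr ⟨u, v, Relation.ReflTransGen.refl, hR, htail⟩
    · rcases ih with hAllE | ⟨a, b, h1, h2, h3⟩
      · exact Or.inl (Relation.ReflTransGen.head hEstep hAllE)
      · exact Or.inr ⟨a, b, Relation.ReflTransGen.head hEstep h1, h2, h3⟩

theorem E_absorb {R E : Set (Rule F V)} {a a₁ z : Tm F V}
    (h : Relation.ReflTransGen (Rew E) a a₁) (hm : RewMod R E a₁ z) : RewMod R E a z := by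
  obtain ⟨u, v, h1, h2, h3⟩ := hm
  exact ⟨u, v, Relation.ReflTransGen.trans h h1, h2, h3⟩

/-- convert an R∪E derivation into RewMod-steps followed by E-steps -/
theorem conv_mod {R E : Set (Rule F V)} {a b : Tm F V}
    (h : Relation.ReflTransGen (Rew (R ∪ E)) a b) :
    ∃ u, Relation.ReflTransGen (RewMod R E) a u ∧ Relation.ReflTransGen (Rew E) u b := by
  induction h using Relation.ReflTransGen.head_induction_on with
  | refl => exact ⟨_, Relation.ReflTransGen.refl, Relation.ReflTransGen.refl⟩
  | @head x x₁ hstep htail ih =>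
    obtain ⟨u₁, hmods, hes⟩ := ih
    rcases Rew_union_iff.1 hstep with hR | hEstep
    · exact ⟨u₁, Relation.ReflTransGen.head
        ⟨x, x₁, Relation.ReflTransGen.refl, hR, Relation.ReflTransGen.refl⟩ hmods, hes⟩
    · rcases (Relation.reflTransGen_iff_eq_or_transGen.mp hmods) with heq | htg
      · subst heq
        exact ⟨x, Relation.ReflTransGen.refl, Relation.ReflTransGen.head hEstep hes⟩
      · obtain ⟨m, hm, hrest⟩ := (Relation.TransGen.head'_iff).1 htg
        exact ⟨u₁, Relation.ReflTransGen.head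
            (E_absorb (Relation.ReflTransGen.single hEstep) hm) hrest, hes⟩

end RewLemmas

section Invariant

variable {F V : Type}

def EdgeRel (R E : Set (Rule F V)) (c c' : F) : Prop :=
  ∃ w : Tm F V, Relation.ReflTransGen (Rew (R ∪ E)) (Tm.app c []) w ∧
    ∃ p : List ℕ, p ≠ [] ∧ w.subAt p = some (Tm.app c' [])

def OccIn (R E : Set (Rule F V)) (s : Tm F V) (e : F) : Prop :=
  ∃ (w : Tm F V) (p' : List ℕ), Relation.ReflTransGen (Rew (R ∪ E)) s w ∧
    w.subAt p' = some (Tm.app e [])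

def Good (R E : Set (Rule F V)) (ar : F → ℕ) (s : Tm F V) (p : List ℕ) (u : Tm F V) : Prop :=
  p.length ≤ s.height ∨
  ∃ (c : F) (ℓ : List F), List.Chain' (EdgeRel R E) (ℓ ++ [c]) ∧
    Relation.ReflTransGen (Rew (R ∪ E)) (Tm.app c []) u ∧
    p.length ≤ s.height + ℓ.length + 1 ∧
    ∀ e ∈ ℓ ++ [c], ar e = 0 ∧ OccIn R E s e

theorem Good_mono {R E : Set (Rule F V)} {ar : F → ℕ} {s : Tm F V} {p p' : List ℕ}
    {u : Tm F V} (hlen : p'.length ≤ p.length) (h : Good R E ar s p u) : Good R E ar s p' u := by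
  rcases h with h | ⟨c, ℓ, h1, h2, h3, h4⟩
  · exact Or.inl (le_trans hlen h)
  · exact Or.inr ⟨c, ℓ, h1, h2, le_trans hlen h3, h4⟩

theorem Good_step {R E : Set (Rule F V)} {ar : F → ℕ} {s : Tm F V} {p : List ℕ}
    {u u' : Tm F V} (h : Good R E ar s p u) (hst : Rew (R ∪ E) u u') : Good R E ar s p u' := by
  rcases h with h | ⟨c, ℓ, h1, h2, h3, h4⟩
  · exact Or.inl h
  · exact Or.inr ⟨c, ℓ, h1, h2.tail hst, h3, h4⟩

theorem step_preserve {R E : Set (Rule F V)} {ar : F → ℕ} {s : Tm F V}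
    (hRflat : ∀ r ∈ R, r.RightFlat) (hRwf : ∀ r ∈ R, r.WF)
    (hE : PermutativeTheory E) (hwf : ∀ r ∈ R ∪ E, WFT ar r.lhs ∧ WFT ar r.rhs)
    {t t' : Tm F V} (hreach : Relation.ReflTransGen (Rew (R ∪ E)) s t)
    (hstep : Rew (R ∪ E) t t')
    (hInv : ∀ p u, t.subAt p = some u → Good R E ar s p u) :
    ∀ p u, t'.subAt p = some u → Good R E ar s p u := by
  obtain ⟨q, rl, hrl, σ, hsub, hrepl⟩ := hstep
  have hstep' : Rew (R ∪ E) t t' := ⟨q, rl, hrl, σ, hsub, hrepl⟩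
  have hwfrule : rl.WF := by
    rcases hrl with h | h
    · exact hRwf rl h
    · exact (hE.1 rl h).1
  have hrflat : rl.rhs.height ≤ 1 := by
    rcases hrl with h | h
    · exact hRflat rl h
    · exact (hE.1 rl h).2.2.2.2.1
  have hlnv := hwfrule.1
  have hvsub := hwfrule.2
  have hrwft : WFT ar rl.rhs := (hwf rl hrl).2
  have root_step : Rew (R ∪ E) (rl.lhs.subst σ) (rl.rhs.subst σ) :=
    ⟨[], rl, hrl, σ, by rw [Tm.subAt_nil], by rw [Tm.replAt_nil]⟩
  -- a variable of the rhs sits at a nonempty position of the lhs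
  have hvarpos : ∀ y : V, y ∈ rl.rhs.varList →
      ∃ py, py ≠ [] ∧ rl.lhs.subAt py = some (Tm.var y) := by
    intro y hy
    obtain ⟨py, hpy⟩ := Tm.mem_varList_iff.1 (hvsub y hy)
    refine ⟨py, ?_, hpy⟩
    rintro rfl
    rw [Tm.subAt_nil] at hpy
    injection hpy with h
    exact hlnv y h
  intro p u hp
  rcases pos_trichotomy q p with hqp | hpq | ⟨w, i, j, p', q', hij, rfl, rfl⟩
  · -- p is below q
    obtain ⟨p₁, rfl⟩ := hqp
    have hsub' : t'.subAt (q ++ p₁) = (rl.rhs.subst σ).subAt p₁ := by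
      rw [Tm.subAt_append, Tm.subAt_replAt_self hrepl]; rfl
    rw [hsub'] at hp
    -- helper to trace a subterm of (σ y) back into t
    have trace : ∀ (y : V), y ∈ rl.rhs.varList → ∀ (p₂ : List ℕ),
        (σ y).subAt p₂ = some u → p₁.length ≤ 1 + p₂.length → Good R E ar s (q ++ p₁) u := by
      intro y hy p₂ hσ hlen
      obtain ⟨py, hpyne, hpy⟩ := hvarpos y hy
      have h1 : (rl.lhs.subst σ).subAt py = some (σ y) := by
        have h := Tm.subAt_subst (σ := σ) hpy
        rwa [Tm.subst_var] at h
      have hpo : t.subAt (q ++ (py ++ p₂)) = some u := by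
        rw [Tm.subAt_append, hsub, Option.bind_some, Tm.subAt_append, h1, Option.bind_some, hσ]
      have := hInv _ _ hpo
      apply Good_mono _ this
      have : 1 ≤ py.length := by
        cases py with
        | nil => exact absurd rfl hpyne
        | cons a l => simp
      simp only [List.length_append]
      omega
    cases p₁ with
    | nil =>
      rw [Tm.subAt_nil] at hp
      injection hp with hp
      subst hp
      exact Good_mono (by simp) (Good_step (hInv q _ hsub) root_step)
    | cons j p₂ =>
      cases hr : rl.rhs with
      | var y =>
        rw [hr] at hp
        have hσ : (σ y).subAt (j :: p₂) = some u := by rwa [Tm.subst_var] at hp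
        exact trace y (by rw [hr, Tm.varList_var]; simp) (j :: p₂) hσ
          (by simp only [List.length_cons]; omega)
      | app g rargs =>
        rw [hr, Tm.subst_app, Tm.subAt_app_cons, List.getElem?_map] at hp
        cases ha : rargs[j]? with
        | none => rw [ha] at hp; cases hp
        | some a =>
          rw [ha] at hp
          simp only [Option.map_some, Option.bind_some] at hp
          have hamem : a ∈ rargs := by
            obtain ⟨hl, rfl⟩ := List.getElem?_eq_some_iff.mp ha
            exact List.getElem_mem hl
          have hflat' : Tm.height (Tm.app g rargs : Tm F V) ≤ 1 := by rw [← hr]; exact hrflat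
          rcases Tm.flat_arg_cases hflat' hamem with ⟨y, rfl⟩ | ⟨c', rfl⟩
          · have hσ : (σ y).subAt p₂ = some u := by rwa [Tm.subst_var] at hp
            refine trace y ?_ p₂ hσ (by simp only [List.length_cons]; omega)
            rw [hr, Tm.varList_app, List.mem_flatten]
            exact ⟨[y], List.mem_map.2 ⟨Tm.var y, hamem, by rw [Tm.varList_var]⟩, by simp⟩
          · rw [Tm.subst_const] at hp
            cases p₂ with
            | cons k p₃ => rw [Tm.subAt_app_cons] at hp; simp at hp
            | nil =>
              rw [Tm.subAt_nil] at hp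
              injection hp with hp
              subst hp
              -- the new-constant case
              have harc : ar c' = 0 := by
                rw [hr] at hrwft
                cases hrwft with
                | app _ _ hlen hall =>
                  have := hall _ hamem
                  cases this with
                  | app _ _ hlen2 _ => simpa using hlen2.symm
              have hocc : OccIn R E s c' :=
                ⟨t', q ++ [j], hreach.tail hstep', by
                  rw [Tm.subAt_append, Tm.subAt_replAt_self hrepl, Option.bind_some,
                    hr, Tm.subst_app, Tm.subAt_app_cons, List.getElem?_map, ha]
                  simp [Tm.subst_const, Tm.subAt_nil]⟩
              have hrsub : (rl.rhs.subst σ).subAt [j] = some (Tm.app c' []) := by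
                rw [hr, Tm.subst_app, Tm.subAt_app_cons, List.getElem?_map, ha]
                simp [Tm.subst_const, Tm.subAt_nil]
              rcases hInv q _ hsub with hle | ⟨c₀, ℓ₀, hch, hre, hlen, hall⟩
              · refine Or.inr ⟨c', [], by simp [List.Chain'], Relation.ReflTransGen.refl, ?_, ?_⟩
                · simp only [List.length_append, List.length_cons, List.length_nil]
                  omega
                · intro e he
                  simp at he
                  subst he
                  exact ⟨harc, hocc⟩
              · refine Or.inr ⟨c', ℓ₀ ++ [c₀], ?_, Relation.ReflTransGen.refl, ?_, ?_⟩
                · rw [List.Chain', List.isChain_append]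
                  refine ⟨hch, List.isChain_singleton _, ?_⟩
                  intro x hx y hy
                  simp at hy
                  subst hy
                  rw [List.getLast?_concat] at hx
                  injection hx with hx
                  subst hx
                  exact ⟨rl.rhs.subst σ, hre.tail root_step, [j], by simp, hrsub⟩
                · simp only [List.length_append, List.length_cons, List.length_nil]
                  omega
                · intro e he
                  rcases List.mem_append.1 he with he | he
                  · exact hall e he
                  · simp at he
                    subst he
                    exact ⟨harc, hocc⟩
  · -- p is (weakly) above q
    obtain ⟨rest, rfl⟩ := hpq
    obtain ⟨u₀, u₀', h1, h2, h3⟩ := Tm.replAt_prefix p hrepl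
    have hu : u = u₀' := by rw [hp] at h3; injection h3
    subst hu
    have hsubu : u₀.subAt rest = some (rl.lhs.subst σ) := by
      rw [Tm.subAt_append, h1, Option.bind_some] at hsub
      exact hsub
    exact Good_step (hInv p u₀ h1) ⟨rest, rl, hrl, σ, hsubu, h2⟩
  · -- diverging positions
    rw [Tm.subAt_replAt_diverge hij.symm w hrepl q'] at hp
    exact hInv _ _ hp

theorem inv_reach {R E : Set (Rule F V)} {ar : F → ℕ} {s : Tm F V}
    (hRflat : ∀ r ∈ R, r.RightFlat) (hRwf : ∀ r ∈ R, r.WF)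
    (hE : PermutativeTheory E) (hwf : ∀ r ∈ R ∪ E, WFT ar r.lhs ∧ WFT ar r.rhs)
    {t : Tm F V} (h : Relation.ReflTransGen (Rew (R ∪ E)) s t) :
    ∀ p u, t.subAt p = some u → Good R E ar s p u := by
  induction h with
  | refl =>
    intro p u hp
    left
    have := Tm.length_le_height s p u hp
    omega
  | tail hpre hstep ih => exact step_preserve hRflat hRwf hE hwf hpre hstep ih

end Invariant

section NonTerm

variable {F V : Type}

theorem EdgeRel_trans {R E : Set (Rule F V)} {a b c : F}
    (h1 : EdgeRel R E a b) (h2 : EdgeRel R E b c) : EdgeRel R E a c := by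
  obtain ⟨w₁, hd₁, p₁, hne₁, hs₁⟩ := h1
  obtain ⟨w₂, hd₂, p₂, hne₂, hs₂⟩ := h2
  obtain ⟨w₁', hRT, hsub'⟩ := Reach_ctx hd₂ hs₁
  refine ⟨w₁', hd₁.trans hRT, p₁ ++ p₂, by simp [hne₁], ?_⟩
  rw [Tm.subAt_append, hsub', Option.bind_some, hs₂]

theorem transGen_EdgeRel {R E : Set (Rule F V)} {a b : F}
    (h : Relation.TransGen (EdgeRel R E) a b) : EdgeRel R E a b := by
  induction h with
  | single h => exact h
  | tail _ h ih => exact EdgeRel_trans ih h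

theorem chain'_transGen {α : Type*} {ρ : α → α → Prop} {L : List α} (h : List.Chain' ρ L) :
    ∀ (i j : ℕ) (hij : i < j) (hj : j < L.length),
      Relation.TransGen ρ (L.get ⟨i, by omega⟩) (L.get ⟨j, hj⟩) := by
  intro i j
  induction j with
  | zero => intro hij; omega
  | succ j ih =>
    intro hij hj
    have hstep : ρ (L.get ⟨j, by omega⟩) (L.get ⟨j + 1, hj⟩) :=
      List.isChain_iff_getElem.1 h j (by omega)
    rcases Nat.lt_or_ge i j with h' | h'
    · exact (ih h' (by omega)).tail hstep
    · have : i = j := by omega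
      subst this
      exact Relation.TransGen.single hstep

theorem modstar_to_unionstar {R E : Set (Rule F V)} {x y : Tm F V}
    (h : Relation.ReflTransGen (RewMod R E) x y) :
    Relation.ReflTransGen (Rew (R ∪ E)) x y := by
  induction h with
  | refl => exact Relation.ReflTransGen.refl
  | tail _ hstep ih =>
    obtain ⟨u, v, h1, h2, h3⟩ := hstep
    refine ih.trans (Relation.ReflTransGen.trans ?_ (Relation.ReflTransGen.trans
      (Relation.ReflTransGen.single (Rew_union_iff.2 (Or.inl h2))) ?_))
    · exact Relation.ReflTransGen.mono (fun a b hab => Rew_union_iff.2 (Or.inr hab)) _ _ h1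
    · exact Relation.ReflTransGen.mono (fun a b hab => Rew_union_iff.2 (Or.inr hab)) _ _ h3

/-- build an infinite single-step chain from an infinite TransGen chain reachable from s -/
theorem no_inf_chain {α : Type*} (ρ : α → α → Prop) {s x₀ : α}
    (h0 : Relation.ReflTransGen ρ s x₀) (g : ℕ → α) (hg0 : g 0 = x₀)
    (hg : ∀ n, Relation.TransGen ρ (g n) (g (n + 1))) :
    ∃ f : ℕ → α, f 0 = s ∧ ∀ n, ρ (f n) (f (n + 1)) := by
  classical
  let B : α → Prop := fun x => ∃ g : ℕ → α, g 0 = x ∧ ∀ n, Relation.TransGen ρ (g n) (g (n + 1))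
  have hBx₀ : B x₀ := ⟨g, hg0, hg⟩
  have hBstep : ∀ x, B x → ∃ y, ρ x y ∧ B y := by
    rintro x ⟨g', hg'0, hg's⟩
    subst hg'0
    obtain ⟨y, hxy, hyrest⟩ := (Relation.TransGen.head'_iff).1 (hg's 0)
    rcases Relation.reflTransGen_iff_eq_or_transGen.1 hyrest with heq | htg
    · exact ⟨y, hxy, ⟨fun n => g' (n + 1), by simpa using heq, fun n => hg's (n + 1)⟩⟩
    · refine ⟨y, hxy, ⟨fun n => Nat.casesOn n y (fun k => g' (k + 1)), rfl, ?_⟩⟩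
      intro n
      cases n with
      | zero => exact htg
      | succ k => exact hg's (k + 1)
  have hBback : ∀ x y, ρ x y → B y → B x := by
    rintro x y hxy ⟨g', hg'0, hg's⟩
    subst hg'0
    refine ⟨fun n => Nat.casesOn n x (fun k => g' k), rfl, ?_⟩
    intro n
    cases n with
    | zero => exact Relation.TransGen.single hxy
    | succ k => exact hg's k
  have hBs : B s := by
    clear hg0
    induction h0 using Relation.ReflTransGen.head_induction_on with
    | refl => exact hBx₀
    | head hstep _ ih => exact hBback _ _ hstep ih
  have key : ∀ x : {x // B x}, ∃ y : {x // B x}, ρ x.1 y.1 := by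
    rintro ⟨x, hx⟩
    obtain ⟨y, hy, hB⟩ := hBstep x hx
    exact ⟨⟨y, hB⟩, hy⟩
  choose nxt hnxt using key
  refine ⟨fun n => (Nat.rec ⟨s, hBs⟩ (fun _ ih => nxt ih) n : {x // B x}).1, rfl, ?_⟩
  intro n
  exact hnxt _

/-- a cycle in the edge relation with an occurrence contradicts termination -/
theorem cycle_nonterm {R E : Set (Rule F V)} (hE : PermutativeTheory E) {s : Tm F V} {c : F}
    (hcyc : EdgeRel R E c c) (hocc : OccIn R E s c) : ¬ TerminatingFrom R E s := by
  obtain ⟨wst, hd, pst, hpne, hpsub⟩ := hcyc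
  -- the cycle derivation contains an R-step
  have hsplit : ∃ a b, Relation.ReflTransGen (Rew E) (Tm.app c []) a ∧ Rew R a b ∧
      Relation.ReflTransGen (Rew (R ∪ E)) b wst := by
    rcases first_R_split hd with hAllE | h
    · obtain ⟨c'', rfl⟩ := E_reach_const hE hAllE
      cases pst with
      | nil => exact absurd rfl hpne
      | cons k pst => rw [Tm.subAt_app_cons] at hpsub; simp at hpsub
    · exact h
  obtain ⟨a, b, hEpart, hRstep, hrest⟩ := hsplit
  -- the invariant state
  let PE : Tm F V → Prop := fun Y => ∃ X π, Relation.ReflTransGen (Rew E) Y X ∧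
    X.subAt π = some (Tm.app c [])
  have hstepPE : ∀ Y, PE Y → ∃ Z, Relation.TransGen (RewMod R E) Y Z ∧ PE Z := by
    rintro Y ⟨X, π, hYX, hXπ⟩
    obtain ⟨Xa, hXXa, hXaπ⟩ := Reach_ctx (S := E) hEpart hXπ
    obtain ⟨Xb, hrep, hRXab⟩ := hRstep.ctx hXaπ
    have hXbπ : Xb.subAt π = some b := Tm.subAt_replAt_self hrep
    obtain ⟨X', hXbX', hX'π⟩ := Reach_ctx (S := R ∪ E) hrest hXbπ
    have hX'c : X'.subAt (π ++ pst) = some (Tm.app c []) := by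
      rw [Tm.subAt_append, hX'π, Option.bind_some, hpsub]
    obtain ⟨Z, hmods, hZE⟩ := conv_mod hXbX'
    refine ⟨Z, ?_, ⟨X', π ++ pst, hZE, hX'c⟩⟩
    exact (Relation.TransGen.head'_iff).2
      ⟨Xb, ⟨Xa, Xb, hYX.trans hXXa, hRXab, Relation.ReflTransGen.refl⟩, hmods⟩
  obtain ⟨w₀, p₀, hsw₀, hw₀c⟩ := hocc
  obtain ⟨u₀, hmod₀, hE₀⟩ := conv_mod hsw₀
  have hPEu₀ : PE u₀ := ⟨w₀, p₀, hE₀, hw₀c⟩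
  have key : ∀ x : {x // PE x}, ∃ y : {x // PE x}, Relation.TransGen (RewMod R E) x.1 y.1 := by
    rintro ⟨x, hx⟩
    obtain ⟨z, hz, hPz⟩ := hstepPE x hx
    exact ⟨⟨z, hPz⟩, hz⟩
  choose nxt hnxt using key
  obtain ⟨f, hf0, hfs⟩ := no_inf_chain (RewMod R E) (s := s) (x₀ := u₀) hmod₀
    (fun n => ((Nat.rec ⟨u₀, hPEu₀⟩ (fun _ ih => nxt ih) n : {x // PE x})).1) rfl
    (fun n => hnxt _)
  intro hterm
  exact hterm ⟨f, hf0, hfs⟩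

/-- pigeonhole: a long chain of constants yields a cycle -/
theorem long_chain_cycle {R E : Set (Rule F V)} [Fintype F] {ar : F → ℕ} {L : List F}
    (hch : List.Chain' (EdgeRel R E) L) (har : ∀ e ∈ L, ar e = 0)
    (hlen : Nat.card {f : F // ar f = 0} < L.length) :
    ∃ cc ∈ L, EdgeRel R E cc cc := by
  classical
  have hcard : Nat.card {f : F // ar f = 0} = Fintype.card {f : F // ar f = 0} :=
    Nat.card_eq_fintype_card
  -- the mapped list cannot be nodup
  have hnd : ¬ L.Nodup := by
    intro hnd
    set L' : List {f : F // ar f = 0} := L.attach.map (fun e => ⟨e.1, har e.1 e.2⟩) with hL'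
    have hlen' : L'.length = L.length := by simp [hL']
    have hnd' : L'.Nodup := by
      refine (List.Nodup.map_on ?_ (List.nodup_attach.2 hnd))
      intro x hx y hy hxy
      rw [Subtype.mk.injEq] at hxy
      exact Subtype.ext hxy
    have := hnd'.length_le_card
    omega
  rw [List.nodup_iff_injective_get] at hnd
  rw [Function.not_injective_iff] at hnd
  obtain ⟨i, j, heq, hne⟩ := hnd
  rcases Nat.lt_or_ge i.1 j.1 with hij | hij
  · refine ⟨L.get i, List.get_mem L i, ?_⟩
    have := chain'_transGen hch i.1 j.1 hij j.2
    rw [show (⟨i.1, by omega⟩ : Fin L.length) = i from rfl] at this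
    rw [show (⟨j.1, j.2⟩ : Fin L.length) = j from rfl] at this
    rw [← heq] at this
    exact transGen_EdgeRel this
  · have hij' : j.1 < i.1 := by
      rcases Nat.lt_or_ge j.1 i.1 with h | h
      · exact h
      · exact absurd (Fin.ext (by omega)) hne
    refine ⟨L.get j, List.get_mem L j, ?_⟩
    have := chain'_transGen hch j.1 i.1 hij' i.2
    rw [show (⟨j.1, by omega⟩ : Fin L.length) = j from rfl] at this
    rw [show (⟨i.1, i.2⟩ : Fin L.length) = i from rfl] at this
    rw [heq] at this
    exact transGen_EdgeRel this

end NonTerm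
/-- For a right-flat TRS `R` and permutative theory `E`, if `R/E` is
terminating from `s`, then every term reachable from `s` with `R/E` has height at most
`height(s) + |Σ₀|`. -/
theorem stmt5 {F V : Type} [Fintype F] (ar : F → ℕ) (R E : Set (Rule F V))
    (hRflat : ∀ r ∈ R, r.RightFlat) (hRwf : ∀ r ∈ R, r.WF)
    (hE : PermutativeTheory E)
    (hwf : ∀ r ∈ R ∪ E, WFT ar r.lhs ∧ WFT ar r.rhs)
    (s : Tm F V) (hs : WFT ar s)
    (hterm : TerminatingFrom R E s) :
    ∀ t : Tm F V, Relation.ReflTransGen (RewMod R E) s t →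
      t.height ≤ s.height + Nat.card {f : F // ar f = 0} := by
  intro t hreach
  have hreach' : Relation.ReflTransGen (Rew (R ∪ E)) s t := modstar_to_unionstar hreach
  by_contra hgt
  push_neg at hgt
  obtain ⟨p, u, hp, hplen⟩ := Tm.exists_deep_pos t
  have hgood := inv_reach hRflat hRwf hE hwf hreach' p u hp
  rcases hgood with hle | ⟨c, ℓ, hch, hre, hlen, hall⟩
  · omega
  · have hlong : Nat.card {f : F // ar f = 0} < (ℓ ++ [c]).length := by
      simp only [List.length_append, List.length_cons, List.length_nil]
      omega
    obtain ⟨cc, hccmem, hcyc⟩ := long_chain_cycle hch (fun e he => (hall e he).1) hlong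
    exact cycle_nonterm hE hcyc (hall cc hccmem).2 hterm
end

section
/- Let T be the transformation mapping terms over a signature Σ to terms over Σ' = Σ_0' ∪ Σ_m', where Σ_0' = Σ (all symbols of Σ as constants), Σ_m' = {f} with m = 1 + max arity in Σ, defined by T(c) = c, T(x) = x, and T(g(t_1,…,t_k)) = f(T(t_1),…,T(t_k),g,…,g). Then for all terms s, t over Σ: s →_R t if and only if T(s) →_{T(R)} T(t), where T(R) = { T(l) → T(r) : l → r ∈ R }. -/
/-- The arity-collapsing transformation `T`: symbols of `Σ` become constants
(`some g`), and a single symbol `none` of arity `m` is used for all applications,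
padding argument lists with copies of the constant `g`. -/
def Tr {F V : Type} (m : ℕ) : Tm F V → Tm (Option F) V
  | Tm.var x => Tm.var x
  | Tm.app g ts =>
    if ts.isEmpty then Tm.app (some g) []
    else Tm.app none ((ts.attach.map (fun t => Tr m t.1)) ++
      List.replicate (m - ts.length) (Tm.app (some g) []))
decreasing_by all_goals (simp_wf; have := List.sizeOf_lt_of_mem t.2; omega)

/-- `T` applied to a TRS, rule-wise. -/
def TrR {F V : Type} (m : ℕ) (R : Set (Rule F V)) : Set (Rule (Option F) V) :=
  {r' | ∃ r ∈ R, r' = ⟨Tr m r.lhs, Tr m r.rhs⟩}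
section Aux

variable {F V : Type}

theorem Tm.my_ind {F V : Type} {P : Tm F V → Prop} (hv : ∀ x, P (Tm.var x))
    (ha : ∀ f ts, (∀ t ∈ ts, P t) → P (Tm.app f ts)) : ∀ t, P t
  | Tm.var x => hv x
  | Tm.app f ts => ha f ts (fun t ht => Tm.my_ind hv ha t)
decreasing_by simp_wf; have := List.sizeOf_lt_of_mem ht; omega

theorem Tm.subst_app_s14 (σ : V → Tm F V) (f : F) (ts : List (Tm F V)) :
    Tm.subst σ (Tm.app f ts) = Tm.app f (ts.map (Tm.subst σ)) := by
  rw [Tm.subst]; congr 1; simp [List.map_attach_eq_pmap]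

theorem Tm.varList_app_s14 (f : F) (ts : List (Tm F V)) :
    Tm.varList (Tm.app f ts) = (ts.map Tm.varList).flatten := by
  rw [Tm.varList]; congr 1; simp [List.map_attach_eq_pmap]

theorem Tr_app (m : ℕ) (g : F) (ts : List (Tm F V)) :
    Tr m (Tm.app g ts) = if ts.isEmpty then Tm.app (some g) []
      else Tm.app none ((ts.map (Tr m)) ++
        List.replicate (m - ts.length) (Tm.app (some g) [])) := by
  rw [Tr]; congr 2; simp [List.map_attach_eq_pmap]

end Aux
theorem Tm.subst_congr {σ τ : V → Tm F V} : ∀ t : Tm F V,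
    (∀ x ∈ t.varList, σ x = τ x) → t.subst σ = t.subst τ := by
  refine Tm.my_ind (fun x h => ?_) (fun f ts ih h => ?_)
  · have : σ x = τ x := h x (by simp [Tm.varList])
    simp [Tm.subst, this]
  · rw [Tm.subst_app_s14, Tm.subst_app_s14]
    congr 1
    refine List.map_congr_left (fun t ht => ih t ht (fun x hx => h x ?_))
    rw [Tm.varList_app_s14]
    simp only [List.mem_flatten, List.mem_map]
    exact ⟨t.varList, ⟨t, ht, rfl⟩, hx⟩

theorem Tr_subst (m : ℕ) (σ : V → Tm F V) : ∀ t : Tm F V,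
    Tr m (t.subst σ) = (Tr m t).subst (fun x => Tr m (σ x)) := by
  refine Tm.my_ind (fun x => ?_) (fun f ts ih => ?_)
  · simp [Tm.subst, Tr]
  · rw [Tm.subst_app_s14, Tr_app, Tr_app]
    rcases ts with _ | ⟨a, ts⟩
    · simp [Tm.subst_app_s14]
    · rw [List.map_cons, if_neg (by simp), if_neg (by simp), Tm.subst_app_s14,
        ← List.map_cons (f := Tm.subst σ)]
      congr 1
      rw [List.map_append, List.map_map, List.map_map, List.length_map,
        List.map_replicate]
      congr 1
      · exact List.map_congr_left (fun t ht => (ih t ht))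
      · congr 1
        rw [Tm.subst_app_s14]
        simp

theorem varList_Tr (m : ℕ) : ∀ t : Tm F V, (Tr m t).varList = t.varList := by
  refine Tm.my_ind (fun x => ?_) (fun f ts ih => ?_)
  · simp [Tr, Tm.varList]
  · rw [Tr_app]
    rcases ts with _ | ⟨a, ts⟩
    · simp [Tm.varList_app_s14]
    · simp only [List.isEmpty_cons, if_neg, Bool.false_eq_true, not_false_iff]
      rw [Tm.varList_app_s14, Tm.varList_app_s14]
      rw [List.map_append, List.map_map, List.map_replicate]
      have : Tm.varList (Tm.app (some f) ([] : List (Tm (Option F) V))) = [] := by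
        simp [Tm.varList_app_s14]
      rw [this]
      rw [List.flatten_append]
      have : (List.replicate (m - (a :: ts).length) ([] : List V)).flatten = [] := by
        simp
      rw [this, List.append_nil]
      congr 1
      exact List.map_congr_left (fun t ht => ih t ht)
theorem Tm.subAt_nil_s14 (t : Tm F V) : t.subAt [] = some t := by rw [Tm.subAt]

theorem Tm.replAt_nil_s14 (t v : Tm F V) : t.replAt [] v = some v := by rw [Tm.replAt]

theorem Tm.subAt_cons {ts : List (Tm F V)} {i : ℕ} {w : Tm F V}
    (hw : ts[i]? = some w) (f : F) (q : List ℕ) :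
    (Tm.app f ts).subAt (i :: q) = w.subAt q := by rw [Tm.subAt, hw]

theorem Tm.replAt_cons {ts : List (Tm F V)} {i : ℕ} {w : Tm F V}
    (hw : ts[i]? = some w) (f : F) (q : List ℕ) (v : Tm F V) :
    (Tm.app f ts).replAt (i :: q) v
      = (w.replAt q v).map (fun u' => Tm.app f (ts.set i u')) := by
  rw [Tm.replAt, hw]
theorem subAt_Tr (m : ℕ) : ∀ (p : List ℕ) (s u : Tm F V),
    s.subAt p = some u → (Tr m s).subAt p = some (Tr m u) := by
  intro p
  induction p with
  | nil => intro s u h; simp [Tm.subAt] at h ⊢; rw [h]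
  | cons i q ih =>
    intro s u h
    rcases s with x | ⟨f, ts⟩
    · simp [Tm.subAt] at h
    · rw [Tm.subAt] at h
      rcases hw : ts[i]? with _ | w
      · rw [hw] at h; simp at h
      · rw [hw] at h
        have hi : i < ts.length := (by obtain ⟨h, _⟩ := List.getElem?_eq_some_iff.mp hw; exact h)
        have hne : ¬ ts.isEmpty = true := by
          rcases ts with _ | _ <;> simp_all
        rw [Tr_app, if_neg hne, Tm.subAt]
        have : (List.map (Tr m) ts ++
            List.replicate (m - ts.length) (Tm.app (some f) []))[i]?
            = some (Tr m w) := by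
          rw [List.getElem?_append_left (by simpa using hi), List.getElem?_map, hw]
          rfl
        rw [this]
        exact ih w u h
theorem replAt_Tr (m : ℕ) : ∀ (p : List ℕ) (s v t : Tm F V),
    s.replAt p v = some t → (Tr m s).replAt p (Tr m v) = some (Tr m t) := by
  intro p
  induction p with
  | nil =>
    intro s v t h
    rw [Tm.replAt_nil_s14] at h
    cases h
    rw [Tm.replAt_nil_s14]
  | cons i q ih =>
    intro s v t h
    rcases s with x | ⟨f, ts⟩
    · simp [Tm.replAt] at h
    · rcases hw : ts[i]? with _ | w
      · rw [Tm.replAt, hw] at h; simp at h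
      · rw [Tm.replAt_cons hw] at h
        simp only [Option.map_eq_some_iff] at h
        obtain ⟨t₀, ht₀, rfl⟩ := h
        have hi : i < ts.length := (by obtain ⟨h, _⟩ := List.getElem?_eq_some_iff.mp hw; exact h)
        have hne : ¬ ts.isEmpty = true := by
          rcases ts with _ | _ <;> simp_all
        have hg : (List.map (Tr m) ts ++
            List.replicate (m - ts.length) (Tm.app (some f) []))[i]?
            = some (Tr m w) := by
          rw [List.getElem?_append_left (by simpa using hi), List.getElem?_map, hw]
          rfl
        rw [Tr_app, if_neg hne, Tm.replAt_cons hg, ih w v t₀ ht₀]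
        have hset : (List.map (Tr m) ts ++
            List.replicate (m - ts.length) (Tm.app (some f) [])).set i (Tr m t₀)
            = List.map (Tr m) (ts.set i t₀) ++
              List.replicate (m - ts.length) (Tm.app (some f) []) := by
          rw [List.set_append_left _ _ (by simpa using hi), List.map_set]
        have hne' : ¬ (ts.set i t₀).isEmpty = true := by
          rcases ts with _ | _ <;> rcases i <;> simp_all
        rw [Option.map_some, hset, Tr_app, if_neg hne', List.length_set]

theorem replAt_isSome : ∀ (p : List ℕ) (s u : Tm F V), s.subAt p = some u →
    ∀ v : Tm F V, ∃ t, s.replAt p v = some t := by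
  intro p
  induction p with
  | nil => intro s u h v; exact ⟨v, Tm.replAt_nil_s14 s v⟩
  | cons i q ih =>
    intro s u h v
    rcases s with x | ⟨f, ts⟩
    · simp [Tm.subAt] at h
    · rcases hw : ts[i]? with _ | w
      · rw [Tm.subAt, hw] at h; simp at h
      · rw [Tm.subAt_cons hw] at h
        obtain ⟨t₀, ht₀⟩ := ih w u h v
        exact ⟨Tm.app f (ts.set i t₀), by rw [Tm.replAt_cons hw, ht₀]; rfl⟩

theorem WFT_subAt {ar : F → ℕ} : ∀ (p : List ℕ) (s u : Tm F V),
    WFT ar s → s.subAt p = some u → WFT ar u := by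
  intro p
  induction p with
  | nil => intro s u hs h; rw [Tm.subAt_nil_s14] at h; cases h; exact hs
  | cons i q ih =>
    intro s u hs h
    rcases s with x | ⟨f, ts⟩
    · simp [Tm.subAt] at h
    · rcases hw : ts[i]? with _ | w
      · rw [Tm.subAt, hw] at h; simp at h
      · rw [Tm.subAt_cons hw] at h
        rcases hs with _ | ⟨_, _, _, hts⟩
        exact ih w u (hts w (List.mem_of_getElem? hw)) h

theorem WFT_subst {ar : F → ℕ} {σ : V → Tm F V} : ∀ t : Tm F V,
    WFT ar t → (∀ x ∈ t.varList, WFT ar (σ x)) → WFT ar (t.subst σ) := by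
  refine Tm.my_ind (fun x ht hσ => ?_) (fun f ts ih ht hσ => ?_)
  · have : (Tm.var x).subst σ = σ x := by rw [Tm.subst]
    rw [this]
    exact hσ x (by simp [Tm.varList])
  · rw [Tm.subst_app_s14]
    rcases ht with _ | ⟨_, _, hlen, hts⟩
    refine WFT.app f _ (by simpa using hlen) ?_
    intro u hu
    obtain ⟨w, hw, rfl⟩ := List.mem_map.mp hu
    refine ih w hw (hts w hw) (fun x hx => hσ x ?_)
    rw [Tm.varList_app_s14]
    simp only [List.mem_flatten, List.mem_map]
    exact ⟨w.varList, ⟨w, hw, rfl⟩, hx⟩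

theorem WFT_replAt {ar : F → ℕ} : ∀ (p : List ℕ) (s v t : Tm F V),
    WFT ar s → WFT ar v → s.replAt p v = some t → WFT ar t := by
  intro p
  induction p with
  | nil => intro s v t hs hv h; rw [Tm.replAt_nil_s14] at h; cases h; exact hv
  | cons i q ih =>
    intro s v t hs hv h
    rcases s with x | ⟨f, ts⟩
    · simp [Tm.replAt] at h
    · rcases hw : ts[i]? with _ | w
      · rw [Tm.replAt, hw] at h; simp at h
      · rw [Tm.replAt_cons hw] at h
        simp only [Option.map_eq_some_iff] at h
        obtain ⟨t₀, ht₀, rfl⟩ := h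
        rcases hs with _ | ⟨_, _, hlen, hts⟩
        refine WFT.app f _ (by simpa using hlen) ?_
        intro u hu
        rcases List.mem_or_eq_of_mem_set hu with h' | rfl
        · exact hts u h'
        · exact ih w v _ (hts w (List.mem_of_getElem? hw)) hv ht₀
theorem subAt_Tr_rev {ar : F → ℕ} (m : ℕ) :
    ∀ (p : List ℕ) (s : Tm F V) (w : Tm (Option F) V), WFT ar s →
    (Tr m s).subAt p = some w →
    (∃ u, s.subAt p = some u ∧ w = Tr m u) ∨
    (∃ g : F, w = Tm.app (some g) [] ∧ 1 ≤ ar g) := by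
  intro p
  induction p with
  | nil =>
    intro s w hs h
    rw [Tm.subAt_nil_s14] at h
    exact Or.inl ⟨s, Tm.subAt_nil_s14 s, by cases h; rfl⟩
  | cons i q ih =>
    intro s w hs h
    rcases s with x | ⟨f, ts⟩
    · rw [Tr] at h
      rw [Tm.subAt] at h
      simp at h
    · by_cases hne : ts.isEmpty = true
      · rw [Tr_app, if_pos hne] at h
        rw [Tm.subAt] at h
        simp at h
      · have hts : ts ≠ [] := by rcases ts with _ | _ <;> simp_all
        rw [Tr_app, if_neg hne] at h
        rcases he : (List.map (Tr m) ts ++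
            List.replicate (m - ts.length) (Tm.app (some f) []))[i]? with _ | e
        · rw [Tm.subAt, he] at h; simp at h
        · rw [Tm.subAt_cons he] at h
          rcases hs with _ | ⟨_, _, hlen, hmem⟩
          by_cases hi : i < ts.length
          · rcases hgw : ts[i]? with _ | wi
            · exact absurd (List.getElem?_eq_none_iff.mp hgw) (by omega)
            · have : e = Tr m wi := by
                rw [List.getElem?_append_left (by simpa using hi), List.getElem?_map, hgw] at he
                exact (Option.some_injective _ he).symm
              subst this
              rcases ih wi w (hmem wi (List.mem_of_getElem? hgw)) h with
                ⟨u, hu1, hu2⟩ | hr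
              · exact Or.inl ⟨u, by rw [Tm.subAt_cons hgw]; exact hu1, hu2⟩
              · exact Or.inr hr
          · have hi' : (List.map (Tr m) ts).length ≤ i := by simpa using not_lt.mp hi
            rw [List.getElem?_append_right hi'] at he
            have hmem' : e ∈ List.replicate (m - ts.length) (Tm.app (some f) []) :=
              List.mem_of_getElem? he
            have he' : e = Tm.app (some f) [] := (List.mem_replicate.mp hmem').2
            subst he'
            rcases q with _ | ⟨j, q'⟩
            · rw [Tm.subAt_nil_s14] at h
              cases h
              refine Or.inr ⟨f, rfl, ?_⟩
              rw [← hlen]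
              rcases ts with _ | _
              · simp at hts
              · simp
            · rw [Tm.subAt] at h
              simp at h

def DD {F V : Type} (d : F) (ar : F → ℕ) : Tm (Option F) V → Tm F V
  | Tm.var x => Tm.var x
  | Tm.app (some g) _ => Tm.app g []
  | Tm.app none l =>
    match l.getLast? with
    | some (Tm.app (some g) _) =>
        Tm.app g ((l.take (ar g)).attach.map (fun t => DD d ar t.1))
    | _ => Tm.app d []
decreasing_by all_goals
  (simp_wf; have := List.sizeOf_lt_of_mem (List.mem_of_mem_take t.2); omega)

theorem DD_Tr (d : F) {ar : F → ℕ} {m : ℕ} (hm : ∀ g : F, ar g < m) :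
    ∀ t : Tm F V, WFT ar t → DD d ar (Tr m t) = t := by
  refine Tm.my_ind (fun x _ => ?_) (fun f ts ih hwf => ?_)
  · rw [Tr, DD]
  · rcases hwf with _ | ⟨_, _, hlen, hmem⟩
    rcases ts with _ | ⟨a, ts'⟩
    · rw [Tr_app]
      simp only [List.isEmpty_nil, if_pos]
      rw [DD]
    · have hne : ¬ (a :: ts').isEmpty = true := by simp
      rw [Tr_app, if_neg hne, DD]
      have hP : (List.replicate (m - (a :: ts').length)
          (Tm.app (some f) ([] : List (Tm (Option F) V)))) ≠ [] := by
        have := hm f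
        simp only [ne_eq, List.replicate_eq_nil_iff]
        omega
      have hlast : (List.map (Tr m) (a :: ts') ++
          List.replicate (m - (a :: ts').length) (Tm.app (some f) [])).getLast?
          = some (Tm.app (some f) []) := by
        rw [List.getLast?_append]
        rcases hk : m - (a :: ts').length with _ | k
        · exfalso; have := hm f; omega
        · simp [List.replicate_succ']
      rw [hlast]
      dsimp only
      have htake : (List.map (Tr m) (a :: ts') ++
          List.replicate (m - (a :: ts').length) (Tm.app (some f) [])).take (ar f)
          = List.map (Tr m) (a :: ts') := by
        rw [List.take_left']
        rw [List.length_map]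
        exact hlen
      rw [htake]
      simp only [List.map_attach_eq_pmap]
      rw [List.pmap_eq_map, List.map_map]
      have : List.map (DD d ar ∘ Tr m) (a :: ts') = a :: ts' :=
        (List.map_congr_left (g := id) (fun t ht => ih t ht (hmem t ht))).trans
          (List.map_id _)
      exact congrArg _ this
theorem match_Tr {ar : F → ℕ} {m : ℕ} (hm : ∀ g : F, ar g < m) (d : F)
    (σ' : V → Tm (Option F) V) :
    ∀ l : Tm F V, WFT ar l → ∀ u : Tm F V, WFT ar u →
      Tr m u = (Tr m l).subst σ' →
      u = l.subst (fun x => DD d ar (σ' x)) ∧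
      ∀ x ∈ l.varList, σ' x = Tr m (DD d ar (σ' x)) ∧ WFT ar (DD d ar (σ' x)) := by
  refine Tm.my_ind (fun x hl u hu h => ?_) (fun c tsl ih hl u hu h => ?_)
  · have hTr : Tr m (Tm.var x) = (Tm.var x : Tm (Option F) V) := by rw [Tr]
    have hsx : (Tm.var x).subst σ' = σ' x := by rw [Tm.subst]
    rw [hTr, hsx] at h
    have hD : DD d ar (σ' x) = u := by rw [← h]; exact DD_Tr d hm u hu
    constructor
    · have : (Tm.var x).subst (fun y => DD d ar (σ' y)) = DD d ar (σ' x) := by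
        rw [Tm.subst]
      rw [this, hD]
    · intro y hy
      have hyx : y = x := by
        have : (Tm.var x : Tm F V).varList = [x] := by rw [Tm.varList]
        rw [this] at hy
        simpa using hy
      subst hyx
      rw [hD]
      exact ⟨h.symm, hu⟩
  · rcases hl with _ | ⟨_, _, hlenl, hmeml⟩
    rcases tsl with _ | ⟨a, tsl'⟩
    · -- l is a constant
      rw [Tr_app] at h
      simp only [List.isEmpty_nil, if_pos] at h
      rw [Tm.subst_app_s14] at h
      simp only [List.map_nil] at h
      rcases u with y | ⟨hU, tsu⟩
      · rw [Tr] at h; simp at h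
      · rcases tsu with _ | ⟨b, tsu'⟩
        · rw [Tr_app] at h
          simp only [List.isEmpty_nil, if_pos] at h
          have hUc : hU = c := by
            injection h with h1 h2
            exact Option.some.inj h1
          subst hUc
          constructor
          · rw [Tm.subst_app_s14]; simp
          · intro y hy
            rw [Tm.varList_app_s14] at hy
            simp at hy
        · rw [Tr_app, if_neg (by simp)] at h
          injection h with h1 h2
          simp at h1
    · -- l = app c (a :: tsl')
      rw [Tr_app, if_neg (by simp), Tm.subst_app_s14] at h
      rcases u with y | ⟨hU, tsu⟩
      · rw [Tr] at h; simp at h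
      · rcases hu with _ | ⟨_, _, hlenu, hmemu⟩
        rcases tsu with _ | ⟨b, tsu'⟩
        · rw [Tr_app] at h
          simp only [List.isEmpty_nil, if_pos] at h
          injection h with h1 h2
          simp at h1
        · rw [Tr_app, if_neg (by simp)] at h
          injection h with h1 h2
          -- h2 : list equality
          rw [List.map_append, List.map_map, List.map_replicate] at h2
          have hconst : Tm.subst σ' (Tm.app (some c) ([] : List (Tm (Option F) V)))
              = Tm.app (some c) [] := by rw [Tm.subst_app_s14]; simp
          rw [hconst] at h2
          -- replicate parts nonempty
          have hku : m - (b :: tsu').length ≠ 0 := by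
            have := hm hU; omega
          have hkl : m - (a :: tsl').length ≠ 0 := by
            have := hm c; omega
          -- heads equal via getLast?
          have glast : ∀ (L : List (Tm (Option F) V)) (k : ℕ)
              (e : Tm (Option F) V),
              (L ++ List.replicate (k + 1) e).getLast? = some e := by
            intro L k e
            rw [List.replicate_succ', ← List.append_assoc, List.getLast?_concat]
          have hUc : hU = c := by
            obtain ⟨k1, hk1⟩ := Nat.exists_eq_succ_of_ne_zero hku
            obtain ⟨k2, hk2⟩ := Nat.exists_eq_succ_of_ne_zero hkl
            have := congrArg List.getLast? h2
            rw [hk1, hk2, glast, glast] at this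
            injection Option.some.inj this with hx _
            exact Option.some.inj hx
          subst hUc
          have hlen_eq : (b :: tsu').length = (a :: tsl').length := by
            rw [hlenu, hlenl]
          have hmap : List.map (Tr m) (b :: tsu')
              = List.map ((Tm.subst σ') ∘ (Tr m)) (a :: tsl') := by
            exact (List.append_inj h2
              (by simp only [List.length_map]; exact hlen_eq)).1
          have key : ∀ i (hiu : i < (b :: tsu').length)
              (hil : i < (a :: tsl').length),
              (b :: tsu')[i] = ((a :: tsl')[i]).subst (fun x => DD d ar (σ' x)) ∧
              ∀ x ∈ ((a :: tsl')[i]).varList,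
                σ' x = Tr m (DD d ar (σ' x)) ∧ WFT ar (DD d ar (σ' x)) := by
            intro i hiu hil
            have hti : Tr m ((b :: tsu')[i]) = (Tr m ((a :: tsl')[i])).subst σ' := by
              have h' := List.getElem_of_eq hmap (by simpa using hiu)
              simp only [List.getElem_map] at h'
              exact h'
            exact ih _ (List.getElem_mem hil) (hmeml _ (List.getElem_mem hil))
              _ (hmemu _ (List.getElem_mem hiu)) hti
          constructor
          · rw [Tm.subst_app_s14]
            congr 1
            refine List.ext_getElem
              (by simp only [List.length_map]; exact hlen_eq) (fun i hiu hil => ?_)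
            rw [List.getElem_map]
            exact (key i hiu (by simpa using hil)).1
          · intro x hx
            rw [Tm.varList_app_s14] at hx
            simp only [List.mem_flatten, List.mem_map] at hx
            obtain ⟨_, ⟨t, ht, rfl⟩, hx⟩ := hx
            obtain ⟨i, hil, rfl⟩ := List.mem_iff_getElem.mp ht
            exact (key i (by omega) hil).2 x hx

theorem Tr_inj (d : F) {ar : F → ℕ} {m : ℕ} (hm : ∀ g : F, ar g < m)
    {u v : Tm F V} (hu : WFT ar u) (hv : WFT ar v) (h : Tr m u = Tr m v) :
    u = v := by
  rw [← DD_Tr d hm u hu, ← DD_Tr d hm v hv, h]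

/-- For all well-formed terms `s, t` over `Σ`:
`s →_R t` iff `T(s) →_{T(R)} T(t)`. -/
theorem stmt14 {F V : Type} (ar : F → ℕ) (m : ℕ) (hm : ∀ g : F, ar g < m)
    (R : Set (Rule F V))
    (hwf : ∀ r ∈ R, WFT ar r.lhs ∧ WFT ar r.rhs ∧ r.WF)
    (s t : Tm F V) (hs : WFT ar s) (ht : WFT ar t) :
    Rew R s t ↔ Rew (TrR m R) (Tr m s) (Tr m t) := by
  constructor
  · rintro ⟨p, r, hrR, σ, h1, h2⟩
    refine ⟨p, ⟨Tr m r.lhs, Tr m r.rhs⟩, ⟨r, hrR, rfl⟩,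
      fun x => Tr m (σ x), ?_, ?_⟩
    · have := subAt_Tr m p s _ h1
      rwa [Tr_subst] at this
    · have := replAt_Tr m p s _ t h2
      rwa [Tr_subst] at this
  · rintro ⟨p, r', hr', σ', h1, h2⟩
    obtain ⟨r, hrR, rfl⟩ := hr'
    obtain ⟨hwl, hwr, hWF⟩ := hwf r hrR
    have h1' : (Tr m s).subAt p = some ((Tr m r.lhs).subst σ') := h1
    have h2' : (Tr m s).replAt p ((Tr m r.rhs).subst σ') = some (Tr m t) := h2
    rcases hl : r.lhs with x | ⟨c, tsl⟩
    · exact absurd hl (hWF.1 x)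
    rcases subAt_Tr_rev m p s _ hs h1' with ⟨u, hu1, hu2⟩ | ⟨g, hg, hg1⟩
    · -- redex position is a position of s
      have hwu : WFT ar u := WFT_subAt p s u hs hu1
      obtain ⟨hueq, hvars⟩ := match_Tr hm c σ' r.lhs hwl u hwu hu2.symm
      set σ : V → Tm F V := fun x => DD c ar (σ' x) with hσ
      have hvr : ∀ x ∈ r.rhs.varList, σ' x = Tr m (σ x) ∧ WFT ar (σ x) :=
        fun x hx => hvars x (hWF.2 x hx)
      have hsub : (Tr m r.rhs).subst σ' = Tr m (r.rhs.subst σ) := by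
        rw [Tr_subst]
        apply Tm.subst_congr
        intro x hx
        rw [varList_Tr] at hx
        exact (hvr x hx).1
      obtain ⟨t₀, ht₀⟩ := replAt_isSome p s u hu1 (r.rhs.subst σ)
      have h3 := replAt_Tr m p s _ t₀ ht₀
      rw [← hsub] at h3
      rw [h2'] at h3
      have hwt₀ : WFT ar t₀ := by
        refine WFT_replAt p s _ t₀ hs ?_ ht₀
        exact WFT_subst r.rhs hwr (fun x hx => (hvr x hx).2)
      have htt : t₀ = t := Tr_inj c hm hwt₀ ht (Option.some.inj h3).symm
      subst htt
      exact ⟨p, r, hrR, σ, by rw [hueq] at hu1; exact ⟨hu1, ht₀⟩⟩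
    · -- redex inside padding: impossible
      exfalso
      rw [hl] at hwl hg
      rcases tsl with _ | ⟨a, tsl'⟩
      · rw [Tr_app] at hg
        simp only [List.isEmpty_nil, if_pos] at hg
        rw [Tm.subst_app_s14] at hg
        simp only [List.map_nil] at hg
        injection hg with hce _
        have hcg : c = g := Option.some.inj hce
        rcases hwl with _ | ⟨_, _, hlen, _⟩
        simp at hlen
        rw [hcg] at hlen
        omega
      · rw [Tr_app, if_neg (by simp), Tm.subst_app_s14] at hg
        injection hg with hce _
        simp at hce
end
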